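/- For every positive integer n and 1 < k ≤ m, q*_{k,m}(n) = Σ_{d^m·δ = n} μ_{k,m}(δ), where the sum is over all pairs (d, δ) of positive integers with d^m·δ = n. -/
import Mathlib


/-- Local factor: value of μ_{k,m} at a prime power p^α. -/
def muLocal (k m α : ℕ) : ℤ :=
  if α < k then 1 else if α = m then -1 else 0

/-- The generalized Möbius function μ_{k,m}. -/
def mukm (k m n : ℕ) : ℤ :=
  if n = 0 then 0 else ∏ p ∈ n.primeFactors, muLocal k m (n.factorization p)

/-- Characteristic function of Q*_{k,m}: every prime exponent α satisfies α mod m ∈ {1,…,k-1}. -/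
def qstar (k m n : ℕ) : ℤ :=
  if n ≠ 0 ∧ ∀ p ∈ n.primeFactors,
      0 < n.factorization p % m ∧ n.factorization p % m < k then 1 else 0

open Finset ArithmeticFunction

/-- Indicator of m-th powers as an arithmetic function (via factorization). -/
def Apow (m : ℕ) : ArithmeticFunction ℤ :=
  ⟨fun n => if n ≠ 0 ∧ ∀ p ∈ n.primeFactors, m ∣ n.factorization p then 1 else 0, by simp⟩

def Mkm (k m : ℕ) : ArithmeticFunction ℤ := ⟨mukm k m, by simp [mukm]⟩

def Qkm (k m : ℕ) : ArithmeticFunction ℤ := ⟨qstar k m, by simp [qstar]⟩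

lemma factorization_eq_zero_of_notMem {a p : ℕ} (h : p ∉ a.primeFactors) :
    a.factorization p = 0 := by
  rwa [← Nat.support_factorization, Finsupp.notMem_support_iff] at h

lemma ite_and_mul (P Q : Prop) [Decidable P] [Decidable Q] :
    (if P ∧ Q then (1:ℤ) else 0) = (if P then 1 else 0) * (if Q then 1 else 0) := by
  by_cases hP : P <;> by_cases hQ : Q <;> simp [hP, hQ]

/-- Generic splitting of a "for all prime factors" condition over a coprime product. -/
lemma forall_primeFactors_mul_iff (P : ℕ → Prop) {a b : ℕ}
    (ha : a ≠ 0) (hb : b ≠ 0) (hab : a.Coprime b) :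
    (∀ p ∈ (a * b).primeFactors, P ((a * b).factorization p)) ↔
      ((∀ p ∈ a.primeFactors, P (a.factorization p)) ∧
       (∀ p ∈ b.primeFactors, P (b.factorization p))) := by
  have hdisj := hab.disjoint_primeFactors
  rw [Nat.primeFactors_mul ha hb]
  constructor
  · intro h
    constructor
    · intro p hp
      have hbp : b.factorization p = 0 :=
        factorization_eq_zero_of_notMem (Finset.disjoint_left.mp hdisj hp)
      have := h p (Finset.mem_union_left _ hp)
      rwa [Nat.factorization_mul ha hb, Finsupp.add_apply, hbp, Nat.add_zero] at this
    · intro p hp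
      have hap : a.factorization p = 0 :=
        factorization_eq_zero_of_notMem (Finset.disjoint_right.mp hdisj hp)
      have := h p (Finset.mem_union_right _ hp)
      rwa [Nat.factorization_mul ha hb, Finsupp.add_apply, hap, Nat.zero_add] at this
  · rintro ⟨h1, h2⟩ p hp
    rw [Nat.factorization_mul ha hb, Finsupp.add_apply]
    rcases Finset.mem_union.mp hp with hp | hp
    · have hbp : b.factorization p = 0 :=
        factorization_eq_zero_of_notMem (Finset.disjoint_left.mp hdisj hp)
      rw [hbp, Nat.add_zero]; exact h1 p hp
    · have hap : a.factorization p = 0 :=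
        factorization_eq_zero_of_notMem (Finset.disjoint_right.mp hdisj hp)
      rw [hap, Nat.zero_add]; exact h2 p hp

lemma Apow_isMultiplicative (m : ℕ) : (Apow m).IsMultiplicative := by
  rw [IsMultiplicative.iff_ne_zero]
  constructor
  · simp [Apow]
  · intro a b ha hb hab
    have hsplit := forall_primeFactors_mul_iff (fun e => m ∣ e) ha hb hab
    simp only [Apow, ArithmeticFunction.coe_mk, ne_eq, mul_eq_zero, ha, hb, or_self,
      not_false_eq_true, true_and, hsplit]
    exact ite_and_mul _ _

lemma Qkm_isMultiplicative (k m : ℕ) : (Qkm k m).IsMultiplicative := by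
  rw [IsMultiplicative.iff_ne_zero]
  constructor
  · simp [Qkm, qstar]
  · intro a b ha hb hab
    have hsplit := forall_primeFactors_mul_iff (fun e => 0 < e % m ∧ e % m < k) ha hb hab
    simp only [Qkm, ArithmeticFunction.coe_mk, qstar, ne_eq, mul_eq_zero, ha, hb, or_self,
      not_false_eq_true, true_and, hsplit]
    exact ite_and_mul _ _

lemma Mkm_isMultiplicative (k m : ℕ) : (Mkm k m).IsMultiplicative := by
  rw [IsMultiplicative.iff_ne_zero]
  constructor
  · simp [Mkm, mukm]
  · intro a b ha hb hab
    have hdisj := hab.disjoint_primeFactors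
    simp only [Mkm, ArithmeticFunction.coe_mk, mukm, mul_eq_zero, ha, hb, or_self, if_neg,
      if_false]
    rw [Nat.primeFactors_mul ha hb, Finset.prod_union hdisj]
    congr 1
    · refine Finset.prod_congr rfl fun p hp => ?_
      have hbp : b.factorization p = 0 :=
        factorization_eq_zero_of_notMem (Finset.disjoint_left.mp hdisj hp)
      rw [Nat.factorization_mul ha hb]
      simp [hbp]
    · refine Finset.prod_congr rfl fun p hp => ?_
      have hap : a.factorization p = 0 :=
        factorization_eq_zero_of_notMem (Finset.disjoint_right.mp hdisj hp)
      rw [Nat.factorization_mul ha hb]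
      simp [hap]

lemma mukm_prime_pow {k m p : ℕ} (hk : 0 < k) (hp : p.Prime) (α : ℕ) :
    mukm k m (p ^ α) = muLocal k m α := by
  rcases Nat.eq_zero_or_pos α with rfl | hα
  · simp [mukm, muLocal, hk]
  · have hne : p ^ α ≠ 0 := pow_ne_zero _ hp.pos.ne'
    rw [mukm, if_neg hne, Nat.primeFactors_prime_pow hα.ne' hp, Finset.prod_singleton,
      hp.factorization_pow, Finsupp.single_eq_same]

lemma Apow_prime_pow {m p : ℕ} (hp : p.Prime) (α : ℕ) :
    Apow m (p ^ α) = if m ∣ α then 1 else 0 := by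
  rcases Nat.eq_zero_or_pos α with rfl | hα
  · simp [Apow]
  · have hne : p ^ α ≠ 0 := pow_ne_zero _ hp.pos.ne'
    have hiff : (∀ q ∈ (p ^ α).primeFactors, m ∣ (p ^ α).factorization q) ↔ m ∣ α := by
      rw [Nat.primeFactors_prime_pow hα.ne' hp]
      constructor
      · intro h
        have := h p (Finset.mem_singleton_self p)
        rwa [hp.factorization_pow, Finsupp.single_eq_same] at this
      · intro h q hq
        rw [Finset.mem_singleton] at hq
        subst hq
        rwa [hp.factorization_pow, Finsupp.single_eq_same]
    simp only [Apow, ArithmeticFunction.coe_mk, ne_eq, hne, not_false_eq_true, true_and, hiff]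

lemma qstar_prime_pow {k m p : ℕ} (hp : p.Prime) {α : ℕ} (hα : 0 < α) :
    qstar k m (p ^ α) = if 0 < α % m ∧ α % m < k then 1 else 0 := by
  have hne : p ^ α ≠ 0 := pow_ne_zero _ hp.pos.ne'
  have hpf : (p ^ α).primeFactors = {p} := Nat.primeFactors_prime_pow hα.ne' hp
  have hiff : (∀ q ∈ (p ^ α).primeFactors,
      0 < (p ^ α).factorization q % m ∧ (p ^ α).factorization q % m < k) ↔
      (0 < α % m ∧ α % m < k) := by
    rw [hpf]
    constructor
    · intro h
      have := h p (Finset.mem_singleton_self p)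
      rwa [hp.factorization_pow, Finsupp.single_eq_same] at this
    · intro h q hq
      rw [Finset.mem_singleton] at hq
      subst hq
      rwa [hp.factorization_pow, Finsupp.single_eq_same]
  simp only [qstar, ne_eq, hne, not_false_eq_true, true_and, hiff]

/-- The key local computation. -/
lemma local_sum {k m : ℕ} (hk : 1 < k) (hkm : k ≤ m) :
    ∀ α : ℕ, ∑ β ∈ Finset.range (α / m + 1), muLocal k m (α - m * β)
      = if α % m < k ∧ (0 < α % m ∨ α = 0) then 1 else 0 := by
  have hm : 0 < m := by omega
  intro α
  induction α using Nat.strong_induction_on with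
  | _ α ih =>
    by_cases hαm : α < m
    · have hdiv : α / m = 0 := Nat.div_eq_of_lt hαm
      have hmod : α % m = α := Nat.mod_eq_of_lt hαm
      have htriv : 0 < α ∨ α = 0 := by omega
      rw [hdiv, Finset.sum_range_one, Nat.mul_zero, Nat.sub_zero, hmod]
      simp only [muLocal]
      by_cases hαk : α < k
      · simp [hαk, htriv]
      · have hne : α ≠ m := by omega
        simp [hαk, hne]
    · push_neg at hαm
      have hα0 : 0 < α := lt_of_lt_of_le hm hαm
      have hdiv : α / m = (α - m) / m + 1 := Nat.div_eq_sub_div hm hαm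
      have hmod : α % m = (α - m) % m := by
        conv_lhs => rw [← Nat.sub_add_cancel hαm, Nat.add_mod_right]
      rw [hdiv, Finset.sum_range_succ']
      have hshift : ∀ β : ℕ, α - m * (β + 1) = (α - m) - m * β := by
        intro β
        rw [Nat.mul_add, Nat.mul_one, ← Nat.sub_sub, Nat.sub_right_comm]
      have hrw : ∑ β ∈ Finset.range ((α - m) / m + 1), muLocal k m (α - m * (β + 1))
          = ∑ β ∈ Finset.range ((α - m) / m + 1), muLocal k m ((α - m) - m * β) :=
        Finset.sum_congr rfl fun β _ => by rw [hshift β]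
      rw [hrw, ih (α - m) (by omega), Nat.mul_zero, Nat.sub_zero]
      have hnk : ¬ α < k := by omega
      rcases Nat.lt_or_ge m α with hlt | hge
      · have hαne : α ≠ m := by omega
        have h1 : α - m ≠ 0 := by omega
        have h2 : α ≠ 0 := by omega
        simp only [muLocal, if_neg hnk, if_neg hαne, add_zero, hmod]
        simp [h1, h2]
      · have hαm' : α = m := le_antisymm hge hαm
        subst hαm'
        have hq0 : (0:ℕ) < k := by omega
        have hmne : α ≠ 0 := hα0.ne'
        have hnotmk : ¬ α < k := by omega
        simp [muLocal, Nat.mod_self, Nat.sub_self, hq0, hmne, hnotmk]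

lemma reindex {m : ℕ} (hm : 0 < m) (g : ℕ → ℤ) (α : ℕ) :
    ∑ i ∈ Finset.range (α + 1), (if m ∣ i then g i else 0)
      = ∑ β ∈ Finset.range (α / m + 1), g (m * β) := by
  rw [← Finset.sum_filter]
  refine Finset.sum_nbij' (fun i => i / m) (fun β => m * β) ?_ ?_ ?_ ?_ ?_
  · intro i hi
    simp only [Finset.mem_filter, Finset.mem_range] at hi
    simp only [Finset.mem_range]
    exact Nat.lt_succ_of_le (Nat.div_le_div_right (Nat.lt_succ_iff.mp hi.1))
  · intro β hβ
    simp only [Finset.mem_range] at hβ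
    simp only [Finset.mem_filter, Finset.mem_range]
    refine ⟨?_, Dvd.intro β rfl⟩
    have h1 : β ≤ α / m := Nat.lt_succ_iff.mp hβ
    have h2 : β * m ≤ α := (Nat.le_div_iff_mul_le hm).mp h1
    have h3 : m * β ≤ α := by rwa [Nat.mul_comm]
    omega
  · intro i hi
    simp only [Finset.mem_filter] at hi
    exact Nat.mul_div_cancel' hi.2
  · intro β _
    exact Nat.mul_div_cancel_left β hm
  · intro i hi
    simp only [Finset.mem_filter] at hi
    rw [Nat.mul_div_cancel' hi.2]

lemma conv_prime_pow {k m p : ℕ} (hk : 1 < k) (hkm : k ≤ m) (hp : p.Prime) (α : ℕ) :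
    (Apow m * Mkm k m) (p ^ α)
      = ∑ β ∈ Finset.range (α / m + 1), muLocal k m (α - m * β) := by
  have hm : 0 < m := by omega
  rw [ArithmeticFunction.mul_apply,
    Nat.sum_divisorsAntidiagonal (f := fun a b => Apow m a * Mkm k m b),
    Nat.sum_divisors_prime_pow hp]
  have heq : ∀ i ∈ Finset.range (α + 1),
      Apow m (p ^ i) * Mkm k m (p ^ α / p ^ i)
        = (if m ∣ i then muLocal k m (α - i) else 0) := by
    intro i hi
    have hiα : i ≤ α := Nat.lt_succ_iff.mp (Finset.mem_range.mp hi)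
    rw [Nat.pow_div hiα hp.pos]
    have hMk : (Mkm k m) (p ^ (α - i)) = muLocal k m (α - i) :=
      mukm_prime_pow (by omega) hp (α - i)
    rw [hMk, Apow_prime_pow hp]
    by_cases h : m ∣ i <;> simp [h]
  rw [Finset.sum_congr rfl heq, reindex hm (fun i => muLocal k m (α - i)) α]

lemma exists_root {m a : ℕ} (hm : 0 < m) (ha : a ≠ 0)
    (h : ∀ p ∈ a.primeFactors, m ∣ a.factorization p) :
    ∃ d : ℕ, d ^ m = a := by
  refine ⟨∏ p ∈ a.primeFactors, p ^ (a.factorization p / m), ?_⟩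
  rw [← Finset.prod_pow]
  have hcong : ∀ p ∈ a.primeFactors,
      (p ^ (a.factorization p / m)) ^ m = p ^ a.factorization p := by
    intro p hp
    rw [← pow_mul, Nat.div_mul_cancel (h p hp)]
  rw [Finset.prod_congr rfl hcong]
  conv_rhs => rw [← Nat.factorization_prod_pow_eq_self ha]
  rw [Finsupp.prod, Nat.support_factorization]

lemma rhs_eq {k m n : ℕ} (hk : 1 < k) (hkm : k ≤ m) (hn : n ≠ 0) :
    ∑ x ∈ (n.divisors ×ˢ n.divisors).filter (fun x => x.1 ^ m * x.2 = n), mukm k m x.2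
      = (Apow m * Mkm k m) n := by
  have hm : 0 < m := by omega
  rw [ArithmeticFunction.mul_apply]
  have step1 : ∑ x ∈ n.divisorsAntidiagonal, Apow m x.1 * Mkm k m x.2
      = ∑ x ∈ n.divisorsAntidiagonal.filter
          (fun x => ∀ p ∈ (x.1).primeFactors, m ∣ (x.1).factorization p),
          mukm k m x.2 := by
    rw [Finset.sum_filter]
    refine Finset.sum_congr rfl fun x hx => ?_
    have hx1 : x.1 ≠ 0 := by
      rcases Nat.mem_divisorsAntidiagonal.mp hx with ⟨hmul, hn0⟩
      intro h0; rw [h0, zero_mul] at hmul; exact hn0 hmul.symm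
    simp only [Apow, Mkm, ArithmeticFunction.coe_mk, ne_eq, hx1, not_false_eq_true, true_and]
    by_cases h : ∀ p ∈ (x.1).primeFactors, m ∣ (x.1).factorization p <;> simp [h]
  rw [step1]
  refine Finset.sum_bij (fun x _ => (x.1 ^ m, x.2)) ?_ ?_ ?_ ?_
  · intro x hx
    simp only [Finset.mem_filter, Finset.mem_product, Nat.mem_divisors] at hx
    obtain ⟨⟨⟨hd, _⟩, ⟨hδ, _⟩⟩, heq⟩ := hx
    simp only [Finset.mem_filter, Nat.mem_divisorsAntidiagonal]
    refine ⟨⟨heq, hn⟩, fun p _ => ?_⟩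
    rw [Nat.factorization_pow]
    exact Dvd.intro _ rfl
  · intro x hx y hy hxy
    have hxy' : (x.1 ^ m, x.2) = (y.1 ^ m, y.2) := hxy
    injection hxy' with h1 h2
    have h3 : x.1 = y.1 := Nat.pow_left_injective (by omega) h1
    exact Prod.ext h3 h2
  · intro b hb
    simp only [Finset.mem_filter, Nat.mem_divisorsAntidiagonal] at hb
    obtain ⟨⟨hmul, _⟩, hdvd⟩ := hb
    have hb1 : b.1 ≠ 0 := by
      intro h0; rw [h0, zero_mul] at hmul; exact hn hmul.symm
    obtain ⟨d, hd⟩ := exists_root hm hb1 hdvd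
    have hdb1 : d ∣ b.1 := hd ▸ dvd_pow_self d (by omega : m ≠ 0)
    have hb1n : b.1 ∣ n := ⟨b.2, hmul.symm⟩
    have hd_dvd : d ∣ n := hdb1.trans hb1n
    have hδ_dvd : b.2 ∣ n := ⟨b.1, by rw [← hmul, Nat.mul_comm]⟩
    refine ⟨(d, b.2), ?_, ?_⟩
    · simp only [Finset.mem_filter, Finset.mem_product, Nat.mem_divisors]
      exact ⟨⟨⟨hd_dvd, hn⟩, ⟨hδ_dvd, hn⟩⟩, by rw [hd]; exact hmul⟩
    · exact Prod.ext hd rfl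
  · intro x _
    rfl

lemma Qkm_eq (k m : ℕ) (hk : 1 < k) (hkm : k ≤ m) : Qkm k m = Apow m * Mkm k m := by
  rw [ArithmeticFunction.IsMultiplicative.eq_iff_eq_on_prime_powers _ (Qkm_isMultiplicative k m) _
    ((Apow_isMultiplicative m).mul (Mkm_isMultiplicative k m))]
  intro p i hp
  rcases Nat.eq_zero_or_pos i with rfl | hi
  · simp only [pow_zero]
    rw [(Qkm_isMultiplicative k m).map_one,
      ((Apow_isMultiplicative m).mul (Mkm_isMultiplicative k m)).map_one]
  · have hQ : Qkm k m (p ^ i) = if 0 < i % m ∧ i % m < k then 1 else 0 :=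
      qstar_prime_pow hp hi
    rw [hQ, conv_prime_pow hk hkm hp i, local_sum hk hkm i]
    have hine : i ≠ 0 := hi.ne'
    simp only [hine, or_false]
    by_cases h1 : 0 < i % m <;> by_cases h2 : i % m < k <;> simp [h1, h2]

theorem qstar_eq_sum_mukm (k m n : ℕ) (hk : 1 < k) (hkm : k ≤ m) (hn : 0 < n) :
    qstar k m n =
      ∑ x ∈ (n.divisors ×ˢ n.divisors).filter (fun x => x.1 ^ m * x.2 = n),
        mukm k m x.2 := by
  have h1 : qstar k m n = Qkm k m n := rfl
  rw [h1, Qkm_eq k m hk hkm, ← rhs_eq hk hkm hn.ne']
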